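/- Let M(k) be a matrix-valued function analytic near k₀ with M(k₀) singular, and suppose there exists a matrix-valued analytic function N(k) = M(k)⁻¹ near k₀ with Laurent expansion. If for every nonzero a with M(k₀)a = 0 and every b the relation M(k₀)b + M'(k₀)a = 0 implies a = 0, then M(k)⁻¹ has at most a simple pole at k₀: i.e., (k − k₀)·M(k)⁻¹ is bounded near k₀. -/

import Mathlib

open Matrix Complex Filter

lemma aux_det_analytic {n : ℕ} {A : ℂ → Matrix (Fin n) (Fin n) ℂ} {k₀ : ℂ}
    (hA : ∀ i j, AnalyticAt ℂ (fun k => A k i j) k₀) :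
    AnalyticAt ℂ (fun k => (A k).det) k₀ := by
  have : (fun k => (A k).det)
      = fun k => ∑ σ : Equiv.Perm (Fin n), ((Equiv.Perm.sign σ : ℤ) : ℂ) * ∏ i, A k (σ i) i := by
    funext k; rw [Matrix.det_apply']
  rw [this]
  exact Finset.analyticAt_fun_sum _ fun σ _ =>
    analyticAt_const.mul (Finset.analyticAt_fun_prod _ fun i _ => hA (σ i) i)

lemma aux_adj_analytic {n : ℕ} {A : ℂ → Matrix (Fin n) (Fin n) ℂ} {k₀ : ℂ}
    (hA : ∀ i j, AnalyticAt ℂ (fun k => A k i j) k₀) (i j : Fin n) :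
    AnalyticAt ℂ (fun k => (A k).adjugate i j) k₀ := by
  have : (fun k => (A k).adjugate i j)
      = fun k => ((A k).updateRow j (Pi.single i 1)).det := by
    funext k; rw [Matrix.adjugate_apply]
  rw [this]
  apply aux_det_analytic
  intro a b
  by_cases hne : a = j
  · have h1 : (fun k => ((A k).updateRow j (Pi.single i 1)) a b)
        = fun _ : ℂ => ((Pi.single i 1 : Fin n → ℂ) b) := by
      funext k; simp [Matrix.updateRow_apply, hne]
    rw [h1]; exact analyticAt_const
  · have h1 : (fun k => ((A k).updateRow j (Pi.single i 1)) a b)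
        = fun k => A k a b := by
      funext k; simp [Matrix.updateRow_apply, hne]
    rw [h1]; exact hA a b

lemma aux_ev_zero {f : ℂ → ℂ} {k₀ : ℂ} (hf : AnalyticAt ℂ f k₀)
    (h : ∀ᶠ k in nhdsWithin k₀ {k₀}ᶜ, f k = 0) : ∀ᶠ k in nhds k₀, f k = 0 := by
  have h0 : f k₀ = 0 := by
    have t1 : Tendsto f (nhdsWithin k₀ {k₀}ᶜ) (nhds (f k₀)) :=
      hf.continuousAt.tendsto.mono_left nhdsWithin_le_nhds
    have t2 : Tendsto f (nhdsWithin k₀ {k₀}ᶜ) (nhds 0) :=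
      Tendsto.congr' (h.mono fun k hk => hk.symm) tendsto_const_nhds
    exact tendsto_nhds_unique t1 t2
  rw [← nhdsNE_sup_pure k₀, eventually_sup]
  exact ⟨h, by simpa using h0⟩

/-- `R q`: there is an entrywise-analytic matrix function agreeing with
`(k - k₀)^q • (M k)⁻¹` on a punctured neighbourhood. -/
def auxR {n : ℕ} (M : ℂ → Matrix (Fin n) (Fin n) ℂ) (k₀ : ℂ) (q : ℕ) : Prop :=
  ∃ H : ℂ → Matrix (Fin n) (Fin n) ℂ,
    (∀ i j, AnalyticAt ℂ (fun k => H k i j) k₀) ∧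
    ∀ᶠ k in nhdsWithin k₀ {k₀}ᶜ, ∀ i j, H k i j = (k - k₀) ^ q * (M k)⁻¹ i j

lemma aux_up {n : ℕ} {M : ℂ → Matrix (Fin n) (Fin n) ℂ} {k₀ : ℂ} {q : ℕ}
    (h : auxR M k₀ q) : auxR M k₀ (q + 1) := by
  obtain ⟨H, hHan, hHev⟩ := h
  refine ⟨fun k => (k - k₀) • H k, fun i j => ?_, ?_⟩
  · exact ((analyticAt_id.sub analyticAt_const).mul (hHan i j) :)
  · filter_upwards [hHev] with k hk i j
    simp only [Matrix.smul_apply, smul_eq_mul, hk i j, pow_succ]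
    ring

lemma aux_init {n : ℕ} {M : ℂ → Matrix (Fin n) (Fin n) ℂ} {k₀ : ℂ}
    (hM : ∀ i j, AnalyticAt ℂ (fun k => M k i j) k₀)
    (hinv : ∀ᶠ k in nhdsWithin k₀ {k₀}ᶜ, IsUnit (M k)) :
    ∃ e : ℕ, auxR M k₀ e := by
  have hd : AnalyticAt ℂ (fun k => (M k).det) k₀ := aux_det_analytic hM
  have hdet : ∀ᶠ k in nhdsWithin k₀ {k₀}ᶜ, (M k).det ≠ 0 := by
    filter_upwards [hinv] with k hk
    exact isUnit_iff_ne_zero.mp ((Matrix.isUnit_iff_isUnit_det (M k)).mp hk)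
  have ho : analyticOrderAt (fun k => (M k).det) k₀ ≠ ⊤ := by
    intro h
    rw [analyticOrderAt_eq_top] at h
    obtain ⟨k, hk0, hkne⟩ := ((h.filter_mono nhdsWithin_le_nhds).and hdet).exists
    exact hkne hk0
  lift analyticOrderAt (fun k => (M k).det) k₀ to ℕ using ho with e he
  obtain ⟨g, hgan, hgne, hgeq⟩ := (hd.analyticOrderAt_eq_natCast).mp he.symm
  refine ⟨e, fun k => (g k)⁻¹ • (M k).adjugate, fun i j => ?_, ?_⟩
  · exact (hgan.inv hgne).mul (aux_adj_analytic hM i j)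
  · filter_upwards [hgeq.filter_mono nhdsWithin_le_nhds, hdet, self_mem_nhdsWithin]
      with k hk hdk hkne i j
    have hkk : k - k₀ ≠ 0 := sub_ne_zero.mpr hkne
    have hgk : g k ≠ 0 := by
      intro h0
      rw [hk, h0, smul_zero] at hdk
      exact hdk rfl
    rw [Matrix.inv_def, Ring.inverse_eq_inv]
    simp only [Matrix.smul_apply, smul_eq_mul, hk]
    field_simp

lemma aux_down {n : ℕ} {M : ℂ → Matrix (Fin n) (Fin n) ℂ} {k₀ : ℂ}
    {M' : Matrix (Fin n) (Fin n) ℂ}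
    (hM : ∀ i j, AnalyticAt ℂ (fun k => M k i j) k₀)
    (hM' : ∀ i j, HasDerivAt (fun k => M k i j) (M' i j) k₀)
    (hinv : ∀ᶠ k in nhdsWithin k₀ {k₀}ᶜ, IsUnit (M k))
    (hcrit : ∀ a b : Fin n → ℂ, (M k₀).mulVec a = 0 →
      (M k₀).mulVec b + M'.mulVec a = 0 → a = 0)
    (q : ℕ) (h : auxR M k₀ (q + 2)) : auxR M k₀ (q + 1) := by
  obtain ⟨H, hHan, hHev⟩ := h
  set f : Fin n → Fin n → ℂ → ℂ := fun i j k =>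
    (∑ l, M k i l * H k l j) - (k - k₀) ^ (q + 2) * (1 : Matrix (Fin n) (Fin n) ℂ) i j with hf
  have hfan : ∀ i j, AnalyticAt ℂ (f i j) k₀ := fun i j =>
    (Finset.analyticAt_fun_sum _ fun l _ => (hM i l).mul (hHan l j)).sub
      (((analyticAt_id.sub analyticAt_const).pow _).mul analyticAt_const)
  have hfz : ∀ i j, ∀ᶠ k in nhds k₀, f i j k = 0 := by
    intro i j
    apply aux_ev_zero (hfan i j)
    filter_upwards [hHev, hinv] with k hk hu
    have h1 : ∑ l, M k i l * H k l j
        = (k - k₀) ^ (q + 2) * ∑ l, M k i l * (M k)⁻¹ l j := by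
      rw [Finset.mul_sum]
      refine Finset.sum_congr rfl fun l _ => ?_
      rw [hk l j]; ring
    have h2 : ∑ l, M k i l * (M k)⁻¹ l j = (1 : Matrix (Fin n) (Fin n) ℂ) i j := by
      rw [← Matrix.mul_apply, Matrix.mul_nonsing_inv _ ((Matrix.isUnit_iff_isUnit_det (M k)).mp hu)]
    rw [hf]; simp only [h1, h2, sub_self]
  have hB0 : ∀ i j, ∑ l, M k₀ i l * H k₀ l j = 0 := by
    intro i j
    have := (hfz i j).self_of_nhds
    rw [hf] at this
    simpa [sub_self, zero_pow] using this
  have hrel : ∀ i j,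
      ∑ l, (M' i l * H k₀ l j + M k₀ i l * deriv (fun k => H k l j) k₀) = 0 := by
    intro i j
    have hD : HasDerivAt (f i j)
        ((∑ l, (M' i l * H k₀ l j + M k₀ i l * deriv (fun k => H k l j) k₀))
          - ((q + 2 : ℕ) * (k₀ - k₀) ^ (q + 2 - 1) * 1)
              * (1 : Matrix (Fin n) (Fin n) ℂ) i j) k₀ := by
      apply HasDerivAt.sub
      · exact HasDerivAt.fun_sum fun l _ =>
          (hM' i l).mul ((hHan l j).differentiableAt.hasDerivAt)
      · exact (((hasDerivAt_id k₀).sub_const k₀).pow _).mul_const _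
    have hD0 : deriv (f i j) k₀ = 0 := by
      have : f i j =ᶠ[nhds k₀] (fun _ => (0 : ℂ)) := hfz i j
      rw [this.deriv_eq, deriv_const]
    have := hD.deriv
    rw [hD0] at this
    have h2 : ((q + 2 : ℕ) * (k₀ - k₀) ^ (q + 2 - 1) * 1)
        * (1 : Matrix (Fin n) (Fin n) ℂ) i j = 0 := by
      simp [sub_self, zero_pow]
    rw [h2, sub_zero] at this
    exact this.symm
  have hzero : ∀ l j, H k₀ l j = 0 := by
    intro l j
    have hcol := hcrit (fun l => H k₀ l j) (fun l => deriv (fun k => H k l j) k₀) ?_ ?_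
    · exact congrFun hcol l
    · funext i
      simpa [Matrix.mulVec, dotProduct] using hB0 i j
    · funext i
      have := hrel i j
      rw [Finset.sum_add_distrib] at this
      simp only [Matrix.mulVec, dotProduct, Pi.add_apply, Pi.zero_apply]
      simpa [add_comm] using this
  have hfac : ∀ l j, ∃ G : ℂ → ℂ, AnalyticAt ℂ G k₀ ∧
      ∀ᶠ k in nhds k₀, H k l j = (k - k₀) * G k := by
    intro l j
    by_cases htop : analyticOrderAt (fun k => H k l j) k₀ = ⊤
    · refine ⟨0, analyticAt_const, ?_⟩
      filter_upwards [analyticOrderAt_eq_top.mp htop] with k hk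
      simp [hk]
    · lift analyticOrderAt (fun k => H k l j) k₀ to ℕ using htop with e he
      obtain ⟨g, hgan, hgne, hgeq⟩ := ((hHan l j).analyticOrderAt_eq_natCast).mp he.symm
      match e, hgeq with
      | 0, hgeq =>
        exfalso
        have := hgeq.self_of_nhds
        simp only [pow_zero, one_smul, hzero l j] at this
        exact hgne this.symm
      | (e' + 1), hgeq =>
        refine ⟨fun k => (k - k₀) ^ e' * g k, (analyticAt_id.sub analyticAt_const).pow _ |>.mul hgan, ?_⟩
        filter_upwards [hgeq] with k hk
        rw [hk]
        simp only [smul_eq_mul, pow_succ]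
        ring
  choose G hGan hGev using hfac
  refine ⟨fun k => Matrix.of fun l j => G l j k, fun l j => by simpa using hGan l j, ?_⟩
  have hGall : ∀ᶠ k in nhds k₀, ∀ l j, H k l j = (k - k₀) * G l j k :=
    Filter.eventually_all.2 fun l => Filter.eventually_all.2 fun j => hGev l j
  filter_upwards [hGall.filter_mono nhdsWithin_le_nhds, hHev, self_mem_nhdsWithin]
    with k hG hH hkne l j
  have hkk : k - k₀ ≠ 0 := sub_ne_zero.mpr hkne
  have : (k - k₀) * G l j k = (k - k₀) * ((k - k₀) ^ (q + 1) * (M k)⁻¹ l j) := by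
    rw [← hG l j, hH l j]
    ring
  simpa using mul_left_cancel₀ hkk this

/-- if `M` is analytic (entrywise) near `k₀`, invertible in a punctured
neighbourhood, and the only solution of `M(k₀)a = 0`, `M(k₀)b + M'(k₀)a = 0` is `a = 0`,
then `M(k)⁻¹` has at most a simple pole at `k₀`: `(k − k₀) M(k)⁻¹` is bounded near `k₀`. -/
theorem stmt9 {n : ℕ} (M : ℂ → Matrix (Fin n) (Fin n) ℂ) (k₀ : ℂ)
    (M' : Matrix (Fin n) (Fin n) ℂ)
    (hM : ∀ i j, AnalyticAt ℂ (fun k => M k i j) k₀)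
    (hM' : ∀ i j, HasDerivAt (fun k => M k i j) (M' i j) k₀)
    (hinv : ∀ᶠ k in nhdsWithin k₀ {k₀}ᶜ, IsUnit (M k))
    (hcrit : ∀ a b : Fin n → ℂ, (M k₀).mulVec a = 0 →
      (M k₀).mulVec b + M'.mulVec a = 0 → a = 0) :
    ∃ C > (0:ℝ), ∃ ε > (0:ℝ), ∀ k, k ≠ k₀ → ‖k - k₀‖ < ε →
      ∀ i j, ‖(k - k₀) * (M k)⁻¹ i j‖ ≤ C := by
  have key : ∀ t, auxR M k₀ (t + 1) → auxR M k₀ 1 := by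
    intro t
    induction t with
    | zero => exact id
    | succ s ih => exact fun h => ih (aux_down hM hM' hinv hcrit s h)
  obtain ⟨e, he⟩ := aux_init hM hinv
  obtain ⟨H, hHan, hHev⟩ : auxR M k₀ 1 := key e (aux_up he)
  have hbd : ∀ i j, ∀ᶠ k in nhds k₀,
      ‖H k i j‖ ≤ ‖H k₀ i j‖ + 1 := by
    intro i j
    have hball := (hHan i j).continuousAt.tendsto (Metric.ball_mem_nhds (H k₀ i j) one_pos)
    filter_upwards [hball] with k hk
    have hd : ‖H k i j - H k₀ i j‖ < 1 := by
      rw [← Complex.dist_eq]; exact hk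
    calc ‖H k i j‖
        = ‖H k i j - H k₀ i j + H k₀ i j‖ := by ring_nf
      _ ≤ ‖H k i j - H k₀ i j‖ + ‖H k₀ i j‖ :=
          norm_add_le _ _
      _ ≤ ‖H k₀ i j‖ + 1 := by linarith
  set S : ℝ := ∑ i, ∑ j, (‖H k₀ i j‖ + 1) with hS
  have hSnn : 0 ≤ S := Finset.sum_nonneg fun i _ => Finset.sum_nonneg fun j _ => by positivity
  have hterm : ∀ i j, ‖H k₀ i j‖ + 1 ≤ S + 1 := by
    intro i j
    have h1 : ‖H k₀ i j‖ + 1 ≤ ∑ j, (‖H k₀ i j‖ + 1) :=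
      Finset.single_le_sum (f := fun j => ‖H k₀ i j‖ + 1)
        (fun j _ => by positivity) (Finset.mem_univ j)
    have h2 : ∑ j, (‖H k₀ i j‖ + 1) ≤ S :=
      Finset.single_le_sum (f := fun i => ∑ j, (‖H k₀ i j‖ + 1))
        (fun i _ => Finset.sum_nonneg fun j _ => by positivity) (Finset.mem_univ i)
    linarith
  have hev : ∀ᶠ k in nhdsWithin k₀ {k₀}ᶜ, ∀ i j,
      ‖(k - k₀) * (M k)⁻¹ i j‖ ≤ S + 1 := by
    have hAll : ∀ᶠ k in nhds k₀, ∀ i j,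
        ‖H k i j‖ ≤ ‖H k₀ i j‖ + 1 :=
      Filter.eventually_all.2 fun i => Filter.eventually_all.2 fun j => hbd i j
    filter_upwards [hAll.filter_mono nhdsWithin_le_nhds, hHev] with k hk hH i j
    have : (k - k₀) * (M k)⁻¹ i j = H k i j := by rw [hH i j, pow_one]
    rw [this]
    exact le_trans (hk i j) (hterm i j)
  rw [eventually_nhdsWithin_iff, Metric.eventually_nhds_iff] at hev
  obtain ⟨ε, hε, hball⟩ := hev
  refine ⟨S + 1, by linarith, ε, hε, fun k hk hlt i j => ?_⟩
  have hdist : dist k k₀ < ε := by rw [Complex.dist_eq]; exact hlt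
  exact hball hdist hk i j
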